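/- Let V be a weighted digraph and suppose φ_{k-1} - φ_k > φ_k - φ_{k+1}. Then the algebra A_k (generated by vertex sets of trees of minimal-weight spanning k-forests) contains exactly k marked elementary sets, i.e., exactly k atoms containing at least one vertex that is a root of some minimal-weight spanning k-forest. -/

import Mathlib

open Relation

/-- The arc relation of a functional digraph: `F i = some j` means there is an arc `i → j`. -/
def Arc {V : Type*} (F : V → Option V) (i j : V) : Prop := F i = some j

/-- A directed forest: a functional digraph (out-degree ≤ 1) without directed circuits. -/
def IsForest {V : Type*} (F : V → Option V) : Prop :=
  ∀ i, ¬ Relation.TransGen (Arc F) i i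

/-- `j` is accessible from `i` by a directed walk. -/
def Reaches {V : Type*} (F : V → Option V) (i j : V) : Prop :=
  Relation.ReflTransGen (Arc F) i j

open Classical in
/-- The `D`-exchange of `F` by `G`: replace the outgoing arcs (in `F`) of vertices of `D`
by their outgoing arcs in `G`. -/
noncomputable def exchange {V : Type*} (D : Set V) (F G : V → Option V) : V → Option V :=
  fun i => if i ∈ D then G i else F i

/-- The set of vertices of the tree of the forest `F` with root `r`. -/
def treeSet {V : Type*} (F : V → Option V) (r : V) : Set V := {i | Reaches F i r}

section Weighted

variable {V : Type*} [Fintype V] [DecidableEq V]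

/-- A spanning forest of the digraph with arc relation `A`. -/
def IsSpanningForest (A : V → V → Prop) (F : V → Option V) : Prop :=
  IsForest F ∧ ∀ i j, F i = some j → A i j

/-- The number of trees (= roots) of a forest. -/
def numTrees (F : V → Option V) : ℕ :=
  (Finset.univ.filter (fun i => F i = none)).card

/-- The weight of a forest: the sum of the weights of its arcs. -/
noncomputable def weight (w : V → V → ℝ) (F : V → Option V) : ℝ :=
  ∑ i, (F i).elim 0 (w i)

/-- `F` is a minimal-weight (extreme) spanning forest with `k` trees. -/
def ExtremeForest (A : V → V → Prop) (w : V → V → ℝ) (k : ℕ) (F : V → Option V) : Prop :=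
  IsSpanningForest A F ∧ numTrees F = k ∧
    ∀ G, IsSpanningForest A G → numTrees G = k → weight w F ≤ weight w G

/-- `φ_k`: the minimum weight of a spanning forest with exactly `k` trees. -/
noncomputable def phi (A : V → V → Prop) (w : V → V → ℝ) (k : ℕ) : ℝ :=
  sInf (weight w '' {F | IsSpanningForest A F ∧ numTrees F = k})

end Weighted

section Algebras

variable {V : Type*} [Fintype V] [DecidableEq V]

/-- The generating family of `A_k`: vertex sets of trees of minimal-weight spanning
`k`-forests. -/
def genSets (A : V → V → Prop) (w : V → V → ℝ) (k : ℕ) : Set (Set V) :=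
  {S | ∃ F r, ExtremeForest A w k F ∧ F r = none ∧ S = treeSet F r}

/-- The algebra `A_k` of subsets of the vertex set generated by the vertex sets of trees of
minimal-weight spanning `k`-forests. -/
noncomputable def alg (A : V → V → Prop) (w : V → V → ℝ) (k : ℕ) : MeasurableSpace V :=
  MeasurableSpace.generateFrom (genSets A w k)

/-- `E` is an elementary set (atom) of the algebra `m`. -/
def IsElementary (m : MeasurableSpace V) (E : Set V) : Prop :=
  @MeasurableSet V m E ∧ E.Nonempty ∧ ∀ S, @MeasurableSet V m S → S ⊆ E → S = ∅ ∨ S = E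

/-- `i` is a marked vertex of level `k`: a root of some minimal-weight spanning `k`-forest. -/
def IsMarked (A : V → V → Prop) (w : V → V → ℝ) (k : ℕ) (i : V) : Prop :=
  ∃ F, ExtremeForest A w k F ∧ F i = none

end Algebras

set_option linter.unusedSectionVars false

section ForestBasics

variable {V : Type*}

lemma reaches_head {F : V → Option V} {i j r : V} (h : F i = some j)
    (hr : Reaches F j r) : Reaches F i r :=
  Relation.ReflTransGen.head h hr

lemma root_reaches_eq {F : V → Option V} {r x : V} (hr : F r = none)
    (h : Reaches F r x) : x = r := by
  rcases Relation.ReflTransGen.cases_head h with h | ⟨c, hc, _⟩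
  · exact h.symm
  · rw [Arc, hr] at hc; cases hc

lemma reaches_total {F : V → Option V} {i a b : V}
    (ha : Reaches F i a) (hb : Reaches F i b) :
    Reaches F a b ∨ Reaches F b a := by
  induction ha using Relation.ReflTransGen.head_induction_on with
  | refl => exact Or.inl hb
  | @head x c h' h ih =>
    rcases Relation.ReflTransGen.cases_head hb with h'' | ⟨d, hd, hdb⟩
    · exact Or.inr (h'' ▸ Relation.ReflTransGen.head h' h)
    · have hcd : c = d := by rw [Arc] at h' hd; rw [h'] at hd; exact Option.some.inj hd
      exact ih (hcd ▸ hdb)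

lemma reaches_root_eq {F : V → Option V} {i r₁ r₂ : V}
    (h1 : Reaches F i r₁) (e1 : F r₁ = none)
    (h2 : Reaches F i r₂) (e2 : F r₂ = none) : r₁ = r₂ := by
  rcases reaches_total h1 h2 with h | h
  · exact (root_reaches_eq e1 h).symm
  · exact root_reaches_eq e2 h

end ForestBasics

section RootOf

variable {V : Type*} [Fintype V] [DecidableEq V]

lemma exists_root {F : V → Option V} (hF : IsForest F) (i : V) :
    ∃ r, Reaches F i r ∧ F r = none := by
  classical
  suffices H : ∀ n (i : V), (Finset.univ.filter fun j => Reaches F i j).card ≤ n →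
      ∃ r, Reaches F i r ∧ F r = none from
    H _ i le_rfl
  intro n
  induction n with
  | zero =>
    intro i hi
    have hp : 0 < (Finset.univ.filter fun j => Reaches F i j).card :=
      Finset.card_pos.mpr ⟨i, Finset.mem_filter.mpr
        ⟨Finset.mem_univ i, Relation.ReflTransGen.refl⟩⟩
    omega
  | succ n ih =>
    intro i hi
    rcases h : F i with _ | j
    · exact ⟨i, Relation.ReflTransGen.refl, h⟩
    · have hsub : (Finset.univ.filter fun x => Reaches F j x)
          ⊆ (Finset.univ.filter fun x => Reaches F i x) := by
        intro x hx
        simp only [Finset.mem_filter, Finset.mem_univ, true_and] at hx ⊢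
        exact reaches_head h hx
      have hin : i ∈ (Finset.univ.filter fun x => Reaches F i x) :=
        Finset.mem_filter.mpr ⟨Finset.mem_univ i, Relation.ReflTransGen.refl⟩
      have hni : i ∉ (Finset.univ.filter fun x => Reaches F j x) := by
        simp only [Finset.mem_filter, Finset.mem_univ, true_and]
        intro hji
        exact hF i (Relation.TransGen.head' h hji)
      have hlt : (Finset.univ.filter fun x => Reaches F j x).card
          < (Finset.univ.filter fun x => Reaches F i x).card :=
        Finset.card_lt_card ⟨hsub, fun hs => hni (hs hin)⟩
      obtain ⟨r, hr1, hr2⟩ := ih j (by omega)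
      exact ⟨r, reaches_head h hr1, hr2⟩

open Classical in
/-- The root of the tree of `F` containing `i`. -/
noncomputable def rootOf (F : V → Option V) (i : V) : V :=
  if h : ∃ r, Reaches F i r ∧ F r = none then h.choose else i

lemma rootOf_spec {F : V → Option V} (hF : IsForest F) (i : V) :
    Reaches F i (rootOf F i) ∧ F (rootOf F i) = none := by
  rw [rootOf, dif_pos (exists_root hF i)]
  exact (exists_root hF i).choose_spec

lemma rootOf_reaches {F : V → Option V} (hF : IsForest F) (i : V) :
    Reaches F i (rootOf F i) := (rootOf_spec hF i).1

lemma rootOf_none {F : V → Option V} (hF : IsForest F) (i : V) :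
    F (rootOf F i) = none := (rootOf_spec hF i).2

lemma rootOf_eq {F : V → Option V} (hF : IsForest F) {i r : V}
    (h : Reaches F i r) (hr : F r = none) : rootOf F i = r :=
  reaches_root_eq (rootOf_reaches hF i) (rootOf_none hF i) h hr

lemma rootOf_root {F : V → Option V} (hF : IsForest F) {r : V}
    (hr : F r = none) : rootOf F r = r :=
  rootOf_eq hF Relation.ReflTransGen.refl hr

lemma mem_treeSet_iff {F : V → Option V} (hF : IsForest F) {r i : V}
    (hr : F r = none) : i ∈ treeSet F r ↔ rootOf F i = r := by
  constructor
  · intro h; exact rootOf_eq hF h hr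
  · intro h; rw [← h]; exact rootOf_reaches hF i

end RootOf
section Exchange

variable {V : Type*} [Fintype V] [DecidableEq V]

lemma exchange_apply_mem {D : Set V} {P Q : V → Option V} {x : V} (hx : x ∈ D) :
    exchange D P Q x = Q x := by simp [exchange, hx]

lemma exchange_apply_not_mem {D : Set V} {P Q : V → Option V} {x : V} (hx : x ∉ D) :
    exchange D P Q x = P x := by simp [exchange, hx]

lemma isForest_exchange {D : Set V} {P Q : V → Option V}
    (hP : IsForest P) (hQ : IsForest Q)
    (hD : ∀ x ∈ D, ∀ y, Q x = some y → y ∈ D) :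
    IsForest (exchange D P Q) := by
  set X := exchange D P Q with hX
  have c0 : ∀ x ∈ D, ∀ y, Arc X x y → Arc Q x y ∧ y ∈ D := by
    intro x hx y hxy
    rw [Arc, hX, exchange_apply_mem hx] at hxy
    exact ⟨hxy, hD x hx y hxy⟩
  have c1 : ∀ x y, Relation.TransGen (Arc X) x y → x ∈ D →
      Relation.TransGen (Arc Q) x y ∧ y ∈ D := by
    intro x y h
    induction h with
    | single h =>
      intro hx
      obtain ⟨h1, h2⟩ := c0 _ hx _ h
      exact ⟨Relation.TransGen.single h1, h2⟩
    | tail h h' ih =>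
      intro hx
      obtain ⟨h1, h2⟩ := ih hx
      obtain ⟨h3, h4⟩ := c0 _ h2 _ h'
      exact ⟨h1.tail h3, h4⟩
  have c2 : ∀ x y, Relation.TransGen (Arc X) x y → y ∉ D →
      Relation.TransGen (Arc P) x y := by
    intro x y h
    induction h with
    | @single b h =>
      intro hy
      by_cases hx : x ∈ D
      · exact absurd (c0 _ hx _ h).2 hy
      · rw [Arc, hX, exchange_apply_not_mem hx] at h
        exact Relation.TransGen.single h
    | @tail b c h h' ih =>
      intro hy
      by_cases hb : b ∈ D
      · exact absurd (c0 _ hb _ h').2 hy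
      · have h'' : Arc P b c := by rwa [Arc, hX, exchange_apply_not_mem hb] at h'
        exact (ih hb).tail h''
  intro x hcyc
  by_cases hx : x ∈ D
  · exact hQ x (c1 x x hcyc hx).1
  · exact hP x (c2 x x hcyc hx)

lemma isSpanningForest_exchange {A : V → V → Prop} {D : Set V} {P Q : V → Option V}
    (hP : IsSpanningForest A P) (hQ : IsSpanningForest A Q)
    (hD : ∀ x ∈ D, ∀ y, Q x = some y → y ∈ D) :
    IsSpanningForest A (exchange D P Q) := by
  refine ⟨isForest_exchange hP.1 hQ.1 hD, ?_⟩
  intro i j h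
  by_cases hi : i ∈ D
  · rw [exchange_apply_mem hi] at h; exact hQ.2 i j h
  · rw [exchange_apply_not_mem hi] at h; exact hP.2 i j h

lemma numTrees_exchange (D : Set V) (P Q : V → Option V) [DecidablePred (· ∈ D)] :
    numTrees (exchange D P Q)
      = (Finset.univ.filter fun x => x ∈ D ∧ Q x = none).card
      + (Finset.univ.filter fun x => x ∉ D ∧ P x = none).card := by
  rw [numTrees, ← Finset.card_union_of_disjoint]
  · congr 1
    ext x
    simp only [Finset.mem_filter, Finset.mem_univ, true_and, Finset.mem_union]
    by_cases hx : x ∈ D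
    · simp [exchange_apply_mem hx, hx]
    · simp [exchange_apply_not_mem hx, hx]
  · rw [Finset.disjoint_left]
    intro x hx hy
    simp only [Finset.mem_filter] at hx hy
    exact hy.2.1 hx.2.1

lemma weight_exchange_add (w : V → V → ℝ) (D : Set V) (P Q : V → Option V) :
    weight w (exchange D P Q) + weight w (exchange Dᶜ P Q)
      = weight w P + weight w Q := by
  rw [weight, weight, weight, weight, ← Finset.sum_add_distrib, ← Finset.sum_add_distrib]
  refine Finset.sum_congr rfl fun x _ => ?_
  by_cases hx : x ∈ D
  · rw [exchange_apply_mem hx, exchange_apply_not_mem (by simpa using hx)]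
    ring
  · rw [exchange_apply_not_mem hx, exchange_apply_mem (by simpa using hx : x ∈ Dᶜ)]

lemma treeSet_closed {Q : V → Option V} {ρ : V} (hρ : Q ρ = none) :
    ∀ x ∈ treeSet Q ρ, ∀ y, Q x = some y → y ∈ treeSet Q ρ := by
  intro x hx y hxy
  rcases Relation.ReflTransGen.cases_head hx with h | ⟨c, hc, hcρ⟩
  · subst h; rw [hρ] at hxy; cases hxy
  · rw [Arc, hxy] at hc
    exact (Option.some.inj hc) ▸ hcρ

lemma treeSet_compl_closed {Q : V → Option V} {ρ : V} :
    ∀ x ∈ (treeSet Q ρ)ᶜ, ∀ y, Q x = some y → y ∈ (treeSet Q ρ)ᶜ := by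
  intro x hx y hxy hy
  exact hx (reaches_head hxy hy)

lemma mem_treeSet_root_eq {Q : V → Option V} {ρ x : V}
    (hx : x ∈ treeSet Q ρ) (hroot : Q x = none) : x = ρ :=
  (root_reaches_eq hroot hx).symm

lemma reaches_of_agree {F U : V → Option V} {r : V}
    (hagree : ∀ a, Reaches F a r → U a = F a) {x : V} (h : Reaches F x r) :
    Reaches U x r := by
  induction h using Relation.ReflTransGen.head_induction_on with
  | refl => exact Relation.ReflTransGen.refl
  | @head a c h' h ih =>
    have ha : U a = F a := hagree a (Relation.ReflTransGen.head h' h)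
    exact Relation.ReflTransGen.head (by rw [Arc, ha]; exact h') ih

end Exchange
section Phi

variable {V : Type*} [Fintype V] [DecidableEq V] {A : V → V → Prop} {w : V → V → ℝ}

lemma weight_image_finite (A : V → V → Prop) (w : V → V → ℝ) (j : ℕ) :
    (weight w '' {F | IsSpanningForest A F ∧ numTrees F = j}).Finite :=
  Set.Finite.image _ (Set.toFinite _)

lemma phi_le {j : ℕ} {W : V → Option V} (hW : IsSpanningForest A W)
    (hn : numTrees W = j) : phi A w j ≤ weight w W :=
  csInf_le (Set.Finite.bddBelow (weight_image_finite A w j)) ⟨W, ⟨hW, hn⟩, rfl⟩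

lemma exists_extreme {j : ℕ} (h : ∃ F, IsSpanningForest A F ∧ numTrees F = j) :
    ∃ P, ExtremeForest A w j P ∧ weight w P = phi A w j := by
  obtain ⟨F, hF⟩ := h
  have hne : (weight w '' {F | IsSpanningForest A F ∧ numTrees F = j}).Nonempty :=
    ⟨weight w F, F, hF, rfl⟩
  have hmem := hne.csInf_mem (weight_image_finite A w j)
  obtain ⟨P, ⟨hP1, hP2⟩, hP3⟩ := hmem
  refine ⟨P, ⟨hP1, hP2, fun G hG hGn => ?_⟩, hP3⟩
  rw [hP3]
  exact phi_le hG hGn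

lemma extreme_weight {j : ℕ} {P : V → Option V} (hP : ExtremeForest A w j P) :
    weight w P = phi A w j := by
  obtain ⟨P₀, hP₀, hw₀⟩ := exists_extreme ⟨P, hP.1, hP.2.1⟩
  exact le_antisymm (hw₀ ▸ hP.2.2 P₀ hP₀.1 hP₀.2.1) (phi_le hP.1 hP.2.1)

lemma exists_spanning_succ {j : ℕ} (h : ∃ F, IsSpanningForest A F ∧ numTrees F = j)
    (hj : j < Fintype.card V) : ∃ F, IsSpanningForest A F ∧ numTrees F = j + 1 := by
  obtain ⟨F, hF, hn⟩ := h
  have hex : ∃ i, ¬ F i = none := by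
    by_contra hall
    push_neg at hall
    have : numTrees F = Fintype.card V := by
      rw [numTrees, Finset.filter_true_of_mem fun i _ => hall i, Finset.card_univ]
    omega
  obtain ⟨i, hi⟩ := hex
  refine ⟨Function.update F i none, ⟨?_, ?_⟩, ?_⟩
  · intro x hx
    refine hF.1 x (Relation.TransGen.mono ?_ x x hx)
    intro a b hab
    rw [Arc, Function.update_apply] at hab
    split_ifs at hab with h
    exact hab
  · intro a b hab
    rw [Function.update_apply] at hab
    split_ifs at hab with h
    exact hF.2 a b hab
  · rw [numTrees] at hn ⊢
    have : (Finset.univ.filter fun x => Function.update F i none x = none)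
        = insert i (Finset.univ.filter fun x => F x = none) := by
      ext x
      simp only [Finset.mem_filter, Finset.mem_univ, true_and, Finset.mem_insert,
        Function.update_apply]
      split_ifs with h
      · simp [h]
      · simp [h]
    rw [this, Finset.card_insert_of_notMem (by simp [hi]), hn]

end Phi
section Core

variable {V : Type*} [Fintype V] [DecidableEq V] {A : V → V → Prop} {w : V → V → ℝ} {k : ℕ}

lemma exists_proot_in_tree (hk : 2 ≤ k)
    (hlt : phi A w (k - 1) - phi A w k > phi A w k - phi A w (k + 1))
    {P Q : V → Option V} (hP : ExtremeForest A w k P) (hQ : ExtremeForest A w k Q)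
    {ρ : V} (hρ : Q ρ = none) :
    ∃ x, P x = none ∧ x ∈ treeSet Q ρ := by
  classical
  by_contra hcon
  push_neg at hcon
  set D := treeSet Q ρ with hD
  have hXf : IsSpanningForest A (exchange D P Q) :=
    isSpanningForest_exchange hP.1 hQ.1 (treeSet_closed hρ)
  have hYf : IsSpanningForest A (exchange Dᶜ P Q) :=
    isSpanningForest_exchange hP.1 hQ.1 treeSet_compl_closed
  have hS1 : (Finset.univ.filter fun x => x ∈ D ∧ Q x = none) = {ρ} := by
    ext x
    simp only [Finset.mem_filter, Finset.mem_univ, true_and, Finset.mem_singleton]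
    constructor
    · rintro ⟨h1, h2⟩; exact mem_treeSet_root_eq h1 h2
    · rintro rfl; exact ⟨Relation.ReflTransGen.refl, hρ⟩
  have hS2 : (Finset.univ.filter fun x => x ∉ D ∧ P x = none)
      = Finset.univ.filter fun x => P x = none := by
    ext x
    simp only [Finset.mem_filter, Finset.mem_univ, true_and]
    exact ⟨fun h => h.2, fun h => ⟨hcon x h, h⟩⟩
  have hS3 : (Finset.univ.filter fun x => x ∈ Dᶜ ∧ Q x = none)
      = (Finset.univ.filter fun x => Q x = none).erase ρ := by
    ext x
    simp only [Finset.mem_filter, Finset.mem_univ, true_and, Finset.mem_erase,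
      Set.mem_compl_iff]
    constructor
    · rintro ⟨h1, h2⟩
      exact ⟨fun hxρ => h1 (hxρ ▸ Relation.ReflTransGen.refl), h2⟩
    · rintro ⟨h1, h2⟩
      exact ⟨fun hxD => h1 (mem_treeSet_root_eq hxD h2), h2⟩
  have hS4 : (Finset.univ.filter fun x => x ∉ Dᶜ ∧ P x = none) = ∅ := by
    ext x
    simp only [Finset.mem_filter, Finset.mem_univ, true_and, Finset.notMem_empty,
      iff_false, not_and, Set.mem_compl_iff, not_not]
    intro hxD hPx
    exact hcon x hPx hxD
  have hXn : numTrees (exchange D P Q) = k + 1 := by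
    rw [numTrees_exchange, hS1, hS2, Finset.card_singleton]
    have := hP.2.1
    rw [numTrees] at this
    omega
  have hρmem : ρ ∈ Finset.univ.filter fun x => Q x = none := by
    simp [hρ]
  have hYn : numTrees (exchange Dᶜ P Q) = k - 1 := by
    rw [numTrees_exchange, hS3, hS4, Finset.card_empty, Finset.card_erase_of_mem hρmem]
    have := hQ.2.1
    rw [numTrees] at this
    omega
  have hsum : weight w (exchange D P Q) + weight w (exchange Dᶜ P Q)
      = phi A w k + phi A w k := by
    rw [weight_exchange_add, extreme_weight hP, extreme_weight hQ]
  have h1 : phi A w (k + 1) ≤ weight w (exchange D P Q) := phi_le hXf hXn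
  have h2 : phi A w (k - 1) ≤ weight w (exchange Dᶜ P Q) := phi_le hYf hYn
  linarith

lemma injOn_rootOf_roots (hk : 2 ≤ k)
    (hlt : phi A w (k - 1) - phi A w k > phi A w k - phi A w (k + 1))
    {P Q : V → Option V} (hP : ExtremeForest A w k P) (hQ : ExtremeForest A w k Q) :
    Set.InjOn (rootOf Q) {x | P x = none} := by
  classical
  set s : Finset V := Finset.univ.filter fun x => P x = none with hs
  set t : Finset V := Finset.univ.filter fun x => Q x = none with ht
  have hmap : ∀ x ∈ s, rootOf Q x ∈ t := by
    intro x _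
    simp only [ht, Finset.mem_filter, Finset.mem_univ, true_and]
    exact rootOf_none hQ.1.1 x
  have hsurj : t ⊆ s.image (rootOf Q) := by
    intro ρ hρ
    simp only [ht, Finset.mem_filter, Finset.mem_univ, true_and] at hρ
    obtain ⟨x, hx1, hx2⟩ := exists_proot_in_tree hk hlt hP hQ hρ
    exact Finset.mem_image.mpr ⟨x, by simp [hs, hx1], rootOf_eq hQ.1.1 hx2 hρ⟩
  have himg : s.image (rootOf Q) = t :=
    subset_antisymm (Finset.image_subset_iff.mpr hmap) hsurj
  have hcard : (s.image (rootOf Q)).card = s.card := by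
    rw [himg]
    have h1 := hP.2.1; have h2 := hQ.2.1
    rw [numTrees] at h1 h2
    rw [← hs] at h1
    rw [← ht] at h2
    omega
  have := Finset.card_image_iff.mp hcard
  have hcoe : (↑s : Set V) = {x | P x = none} := by
    ext x; simp [hs]
  rwa [hcoe] at this

lemma exchange_extreme (hk : 2 ≤ k)
    (hlt : phi A w (k - 1) - phi A w k > phi A w k - phi A w (k + 1))
    {P Q : V → Option V} (hP : ExtremeForest A w k P) (hQ : ExtremeForest A w k Q)
    {ρ : V} (hρ : Q ρ = none) {i₀ : V} (h₀ : P i₀ = none) (hi₀ : i₀ ∈ treeSet Q ρ) :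
    ExtremeForest A w k (exchange (treeSet Q ρ) P Q) ∧
      ExtremeForest A w k (exchange (treeSet Q ρ)ᶜ P Q) := by
  classical
  set D := treeSet Q ρ with hD
  have huniq : ∀ x, P x = none → x ∈ D → x = i₀ := by
    intro x hx hxD
    refine injOn_rootOf_roots hk hlt hP hQ hx h₀ ?_
    rw [rootOf_eq hQ.1.1 hxD hρ, rootOf_eq hQ.1.1 hi₀ hρ]
  have hXf : IsSpanningForest A (exchange D P Q) :=
    isSpanningForest_exchange hP.1 hQ.1 (treeSet_closed hρ)
  have hYf : IsSpanningForest A (exchange Dᶜ P Q) :=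
    isSpanningForest_exchange hP.1 hQ.1 treeSet_compl_closed
  have hS1 : (Finset.univ.filter fun x => x ∈ D ∧ Q x = none) = {ρ} := by
    ext x
    simp only [Finset.mem_filter, Finset.mem_univ, true_and, Finset.mem_singleton]
    constructor
    · rintro ⟨h1, h2⟩; exact mem_treeSet_root_eq h1 h2
    · rintro rfl; exact ⟨Relation.ReflTransGen.refl, hρ⟩
  have hS2 : (Finset.univ.filter fun x => x ∉ D ∧ P x = none)
      = (Finset.univ.filter fun x => P x = none).erase i₀ := by
    ext x
    simp only [Finset.mem_filter, Finset.mem_univ, true_and, Finset.mem_erase]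
    constructor
    · rintro ⟨h1, h2⟩
      exact ⟨fun hxi => h1 (hxi ▸ hi₀), h2⟩
    · rintro ⟨h1, h2⟩
      refine ⟨fun hxD => h1 (huniq x h2 hxD), h2⟩
  have hS3 : (Finset.univ.filter fun x => x ∈ Dᶜ ∧ Q x = none)
      = (Finset.univ.filter fun x => Q x = none).erase ρ := by
    ext x
    simp only [Finset.mem_filter, Finset.mem_univ, true_and, Finset.mem_erase,
      Set.mem_compl_iff]
    constructor
    · rintro ⟨h1, h2⟩
      exact ⟨fun hxρ => h1 (hxρ ▸ Relation.ReflTransGen.refl), h2⟩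
    · rintro ⟨h1, h2⟩
      exact ⟨fun hxD => h1 (mem_treeSet_root_eq hxD h2), h2⟩
  have hS4 : (Finset.univ.filter fun x => x ∉ Dᶜ ∧ P x = none) = {i₀} := by
    ext x
    simp only [Finset.mem_filter, Finset.mem_univ, true_and, Finset.mem_singleton,
      Set.mem_compl_iff, not_not]
    constructor
    · rintro ⟨h1, h2⟩; exact huniq x h2 h1
    · rintro rfl; exact ⟨hi₀, h₀⟩
  have hPk := hP.2.1; have hQk := hQ.2.1
  rw [numTrees] at hPk hQk
  have hi₀mem : i₀ ∈ Finset.univ.filter fun x => P x = none := by simp [h₀]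
  have hρmem : ρ ∈ Finset.univ.filter fun x => Q x = none := by simp [hρ]
  have hXn : numTrees (exchange D P Q) = k := by
    rw [numTrees_exchange, hS1, hS2, Finset.card_singleton,
      Finset.card_erase_of_mem hi₀mem]
    omega
  have hYn : numTrees (exchange Dᶜ P Q) = k := by
    rw [numTrees_exchange, hS3, hS4, Finset.card_singleton,
      Finset.card_erase_of_mem hρmem]
    omega
  have hsum : weight w (exchange D P Q) + weight w (exchange Dᶜ P Q)
      = phi A w k + phi A w k := by
    rw [weight_exchange_add, extreme_weight hP, extreme_weight hQ]
  have h1 : phi A w k ≤ weight w (exchange D P Q) := phi_le hXf hXn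
  have h2 : phi A w k ≤ weight w (exchange Dᶜ P Q) := phi_le hYf hYn
  have hwX : weight w (exchange D P Q) = phi A w k := by linarith
  have hwY : weight w (exchange Dᶜ P Q) = phi A w k := by linarith
  constructor
  · exact ⟨hXf, hXn, fun G hG hGn => by rw [hwX]; exact phi_le hG hGn⟩
  · exact ⟨hYf, hYn, fun G hG hGn => by rw [hwY]; exact phi_le hG hGn⟩

end Core
section KeyLemma

variable {V : Type*} [Fintype V] [DecidableEq V] {A : V → V → Prop} {w : V → V → ℝ} {k : ℕ}

lemma rootOf_marked_eq (hk : 2 ≤ k)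
    (hlt : phi A w (k - 1) - phi A w k > phi A w k - phi A w (k + 1))
    {i : V} (hi : IsMarked A w k i) {F G : V → Option V}
    (hF : ExtremeForest A w k F) (hG : ExtremeForest A w k G) :
    rootOf G i = rootOf G (rootOf F i) := by
  obtain ⟨H, hH, hHi⟩ := hi
  set r := rootOf F i with hrdef
  have hr : F r = none := rootOf_none hF.1.1 i
  have hir : Reaches F i r := rootOf_reaches hF.1.1 i
  set T := treeSet F r with hT
  obtain ⟨ρ₀, hρ₀G, hρ₀T⟩ := exists_proot_in_tree hk hlt hG hF hr
  set U := exchange T G F with hUdef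
  have hU : ExtremeForest A w k U := (exchange_extreme hk hlt hG hF hr hρ₀G hρ₀T).1
  have hUagree : ∀ a, Reaches F a r → U a = F a := fun a ha => exchange_apply_mem ha
  have hrT : r ∈ T := Relation.ReflTransGen.refl
  have hUr : U r = none := by rw [hUdef, exchange_apply_mem hrT]; exact hr
  have hiU : Reaches U i r := reaches_of_agree hUagree hir
  have hρ₀U : Reaches U ρ₀ r := reaches_of_agree hUagree hρ₀T
  set W := exchange (treeSet U r)ᶜ H U with hWdef
  have hW : ExtremeForest A w k W :=
    (exchange_extreme hk hlt hH hU hUr hHi hiU).2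
  set ρ := rootOf G i with hρdef
  set ρ' := rootOf G r with hρ'def
  have hρnone : G ρ = none := rootOf_none hG.1.1 i
  have hρ'none : G ρ' = none := rootOf_none hG.1.1 r
  -- Step A : ρ = ρ₀
  have hstepA : ρ = ρ₀ := by
    by_cases hGi : G i = none
    · have e1 : rootOf U i = r := rootOf_eq hU.1.1 hiU hUr
      have e2 : rootOf U ρ₀ = r := rootOf_eq hU.1.1 hρ₀U hUr
      have hiρ₀ : i = ρ₀ :=
        injOn_rootOf_roots hk hlt hG hU hGi hρ₀G (e1.trans e2.symm)
      rw [hρdef, rootOf_root hG.1.1 hGi, hiρ₀]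
    · by_contra hne
      have hρT : ρ ∉ T := by
        intro hρT
        exact hne (injOn_rootOf_roots hk hlt hG hF hρnone hρ₀G
          (by rw [rootOf_eq hF.1.1 hρT hr, rootOf_eq hF.1.1 hρ₀T hr]))
      have hρTU : ρ ∉ treeSet U r := by
        intro hmem
        have hUρ : U ρ = none := by
          rw [hUdef, exchange_apply_not_mem hρT]; exact hρnone
        have : ρ = r := mem_treeSet_root_eq hmem hUρ
        exact hρT (this ▸ hrT)
      have hWi : W i = none := by
        rw [hWdef, exchange_apply_not_mem (show i ∉ (treeSet U r)ᶜ from fun hc => hc hiU)]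
        exact hHi
      have hWρ : W ρ = none := by
        rw [hWdef, exchange_apply_mem (show ρ ∈ (treeSet U r)ᶜ from hρTU), hUdef,
          exchange_apply_not_mem hρT]
        exact hρnone
      have e2 : rootOf G ρ = ρ := rootOf_root hG.1.1 hρnone
      have : i = ρ := injOn_rootOf_roots hk hlt hW hG hWi hWρ (hρdef ▸ e2.symm)
      exact hGi (this ▸ hρnone)
  -- Step B : ρ' = ρ₀
  have hstepB : ρ' = ρ₀ := by
    by_cases hGr : G r = none
    · have e1 : rootOf F r = r := rootOf_root hF.1.1 hr
      have e2 : rootOf F ρ₀ = r := rootOf_eq hF.1.1 hρ₀T hr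
      have hrρ₀ : r = ρ₀ :=
        injOn_rootOf_roots hk hlt hG hF hGr hρ₀G (e1.trans e2.symm)
      rw [hρ'def, rootOf_root hG.1.1 hGr, hrρ₀]
    · by_contra hne
      have hρ'T : ρ' ∉ T := by
        intro hρ'T
        exact hne (injOn_rootOf_roots hk hlt hG hF hρ'none hρ₀G
          (by rw [rootOf_eq hF.1.1 hρ'T hr, rootOf_eq hF.1.1 hρ₀T hr]))
      have hUρ' : U ρ' = none := by
        rw [hUdef, exchange_apply_not_mem hρ'T]; exact hρ'none
      have e2 : rootOf G ρ' = ρ' := rootOf_root hG.1.1 hρ'none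
      have : r = ρ' := injOn_rootOf_roots hk hlt hU hG hUr hUρ' (hρ'def ▸ e2.symm)
      exact hGr (this ▸ hρ'none)
  rw [hstepA, hstepB]

end KeyLemma
section Atoms

variable {V : Type*} [Fintype V] [DecidableEq V] (A : V → V → Prop) (w : V → V → ℝ) (k : ℕ)

/-- The membership-pattern class (atom candidate) of a vertex `v`. -/
def cell (v : V) : Set V := {u | ∀ S ∈ genSets A w k, (u ∈ S ↔ v ∈ S)}

variable {A w k}

lemma mem_cell_self (v : V) : v ∈ cell A w k v := fun _ _ => Iff.rfl

lemma cell_measurable (v : V) : @MeasurableSet V (alg A w k) (cell A w k v) := by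
  classical
  have hdesc : cell A w k v
      = ⋂ S ∈ genSets A w k, (if v ∈ S then S else Sᶜ) := by
    ext u
    simp only [cell, Set.mem_setOf_eq, Set.mem_iInter]
    constructor
    · intro h S hS
      split_ifs with hv
      · exact (h S hS).mpr hv
      · exact fun hu => hv ((h S hS).mp hu)
    · intro h S hS
      have := h S hS
      split_ifs at this with hv
      · exact ⟨fun _ => hv, fun _ => this⟩
      · exact ⟨fun hu => absurd hu this, fun hv' => absurd hv' hv⟩
  rw [hdesc]
  have hcnt : (genSets A w k).Countable := (Set.toFinite _).countable
  refine MeasurableSet.biInter hcnt fun S hS => ?_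
  have hbasic : @MeasurableSet V (alg A w k) S :=
    MeasurableSpace.measurableSet_generateFrom hS
  split_ifs
  · exact hbasic
  · exact hbasic.compl

lemma cell_splits {v : V} {S : Set V} (hS : @MeasurableSet V (alg A w k) S) :
    cell A w k v ⊆ S ∨ cell A w k v ∩ S = ∅ := by
  induction S, hS using MeasurableSpace.generateFrom_induction with
  | hC S hS =>
    by_cases hv : v ∈ S
    · exact Or.inl fun u hu => (hu S hS).mpr hv
    · refine Or.inr (Set.eq_empty_iff_forall_notMem.mpr fun u hu => ?_)
      exact hv ((hu.1 S hS).mp hu.2)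
  | empty => exact Or.inr (Set.inter_empty _)
  | compl S _ ih =>
    rcases ih with h | h
    · refine Or.inr (Set.eq_empty_iff_forall_notMem.mpr fun u hu => ?_)
      exact hu.2 (h hu.1)
    · refine Or.inl fun u hu hS => ?_
      exact Set.eq_empty_iff_forall_notMem.mp h u ⟨hu, hS⟩
  | iUnion f _ ih =>
    by_cases hex : ∃ n, cell A w k v ⊆ f n
    · obtain ⟨n, hn⟩ := hex
      exact Or.inl (hn.trans (Set.subset_iUnion f n))
    · push_neg at hex
      refine Or.inr (Set.eq_empty_iff_forall_notMem.mpr fun u hu => ?_)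
      obtain ⟨n, hn⟩ := Set.mem_iUnion.mp hu.2
      rcases ih n with h | h
      · exact hex n h
      · exact Set.eq_empty_iff_forall_notMem.mp h u ⟨hu.1, hn⟩

lemma cell_elementary (v : V) : IsElementary (alg A w k) (cell A w k v) := by
  refine ⟨cell_measurable v, ⟨v, mem_cell_self v⟩, fun S hS hsub => ?_⟩
  rcases Set.eq_empty_or_nonempty S with h | ⟨u, hu⟩
  · exact Or.inl h
  · rcases cell_splits (v := v) hS with h | h
    · exact Or.inr (le_antisymm hsub h)
    · exact absurd (Set.eq_empty_iff_forall_notMem.mp h u ⟨hsub hu, hu⟩) not_false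

lemma elementary_eq_cell {E : Set V} (hE : IsElementary (alg A w k) E) {v : V}
    (hv : v ∈ E) : E = cell A w k v := by
  have hsub : E ⊆ cell A w k v := by
    rcases cell_splits (v := v) hE.1 with h | h
    · rcases hE.2.2 (cell A w k v) (cell_measurable v) h with h' | h'
      · exact absurd (h' ▸ mem_cell_self v : v ∈ (∅ : Set V)) not_false
      · exact h'.symm.subset
    · exact absurd (Set.eq_empty_iff_forall_notMem.mp h v ⟨mem_cell_self v, hv⟩)
        not_false
  rcases (cell_elementary v).2.2 E hE.1 hsub with h | h
  · exact absurd (h ▸ hv : v ∈ (∅ : Set V)) not_false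
  · exact h

lemma cell_eq_of_pattern {i r : V} (h : ∀ S ∈ genSets A w k, (i ∈ S ↔ r ∈ S)) :
    cell A w k i = cell A w k r := by
  ext u
  simp only [cell, Set.mem_setOf_eq]
  exact ⟨fun hu S hS => (hu S hS).trans (h S hS),
    fun hu S hS => (hu S hS).trans (h S hS).symm⟩

lemma marked_pattern (hk : 2 ≤ k)
    (hlt : phi A w (k - 1) - phi A w k > phi A w k - phi A w (k + 1))
    {i : V} (hi : IsMarked A w k i) {F₀ : V → Option V}
    (hF₀ : ExtremeForest A w k F₀) :
    ∀ S ∈ genSets A w k, (i ∈ S ↔ rootOf F₀ i ∈ S) := by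
  rintro S ⟨G, ρ₂, hG, hρ₂, rfl⟩
  rw [mem_treeSet_iff hG.1.1 hρ₂, mem_treeSet_iff hG.1.1 hρ₂,
    ← rootOf_marked_eq hk hlt hi hF₀ hG]

end Atoms
/-- Under the strict convexity inequality, the algebra `A_k` contains exactly `k` marked
elementary sets. -/
theorem card_marked_elementary {V : Type*} [Fintype V] [DecidableEq V]
    (A : V → V → Prop) (w : V → V → ℝ) (k : ℕ)
    (hk : 2 ≤ k) (hk' : k + 1 ≤ Fintype.card V)
    (hEx : ∃ F, IsSpanningForest A F ∧ numTrees F = k - 1)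
    (hlt : phi A w (k - 1) - phi A w k > phi A w k - phi A w (k + 1)) :
    {E : Set V | IsElementary (alg A w k) E ∧ ∃ i ∈ E, IsMarked A w k i}.ncard = k := by
  classical
  have hEk : ∃ F, IsSpanningForest A F ∧ numTrees F = k := by
    obtain ⟨F, h1, h2⟩ := exists_spanning_succ hEx (by omega)
    exact ⟨F, h1, by omega⟩
  obtain ⟨F₀, hF₀, -⟩ := exists_extreme hEk
  set R : Finset V := Finset.univ.filter (fun x => F₀ x = none) with hRdef
  have hRk : R.card = k := hF₀.2.1
  have hseteq : {E : Set V | IsElementary (alg A w k) E ∧ ∃ i ∈ E, IsMarked A w k i}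
      = (cell A w k) '' (↑R : Set V) := by
    ext E
    simp only [Set.mem_setOf_eq, Set.mem_image]
    constructor
    · rintro ⟨hE, i, hiE, him⟩
      refine ⟨rootOf F₀ i, ?_, ?_⟩
      · simp only [hRdef, Finset.coe_filter, Set.mem_setOf_eq, Finset.mem_univ,
          true_and]
        exact rootOf_none hF₀.1.1 i
      · exact ((elementary_eq_cell hE hiE).trans
          (cell_eq_of_pattern (marked_pattern hk hlt him hF₀))).symm
    · rintro ⟨x, hx, rfl⟩
      have hx' : F₀ x = none := by
        simpa [hRdef] using hx
      exact ⟨cell_elementary x, x, mem_cell_self x, ⟨F₀, hF₀, hx'⟩⟩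
  have hinj : Set.InjOn (cell A w k) (↑R : Set V) := by
    intro x hx y hy hxy
    have hy' : F₀ y = none := by simpa [hRdef] using hy
    have hyx : y ∈ cell A w k x := hxy ▸ mem_cell_self y
    have hpat := hyx (treeSet F₀ x) ⟨F₀, x, hF₀, by simpa [hRdef] using hx, rfl⟩
    have hreach : y ∈ treeSet F₀ x := hpat.mpr Relation.ReflTransGen.refl
    exact root_reaches_eq hy' hreach
  rw [hseteq, Set.ncard_image_of_injOn hinj, Set.ncard_coe_finset, hRk]
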